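/- Let (q, p) be feasible for Problem (P) with q_k = 0 for all k ∈ D^c, let 1 ≤ j ≤ |D| − 1, suppose the energy-causality constraint holds with equality at i = d_j, i.e. ∑_{k=1}^{d_j} ∑_{n∈N_k^I} p_{k,n} = ζ·∑_{k=1}^{d_j−1} h_k·q_k + B1, and suppose Δ := ζ·∑_{k=1}^{d_{j+1}−1} h_k·q_k + B1 − ∑_{k=1}^{d_{j+1}} ∑_{n∈N_k^I} p_{k,n} > 0. Define q̂ by q̂_{d_j} := q_{d_j} − Δ/(ζ·h_{d_j}), q̂_{d_{j+1}} := q_{d_{j+1}} + Δ/(ζ·h_{d_j}), and q̂_k := q_k otherwise; define p̂ by p̂_{k,n} := p_{k,n} + (h_{d_{j+1}} − h_{d_j})·Δ/(h_{d_j}·(K − d_{j+1})·N) for all k ∈ {d_{j+1}+1,…,K} and n ∈ N_k^I, and p̂_{k,n} := p_{k,n} otherwise. Then q̂ is nonnegative, (q̂, p̂) is feasible for Problem (P), and R(p̂) > R(p). -/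

import Mathlib

noncomputable section

/-- The information sub-channel set `N_k^I = {0,…,N} \ {Π(k)}`. -/
def NI (N : ℕ) (Pi : ℕ → ℕ) (k : ℕ) : Finset ℕ := Finset.Icc 0 N \ {Pi k}

/-- Feasibility for Problem (P) with a single WET sub-channel `Π(k)` per slot. -/
def FeasibleP (K N : ℕ) (h : ℕ → ℕ → ℝ) (Q ζ B1 : ℝ) (Pi : ℕ → ℕ)
    (q : ℕ → ℝ) (p : ℕ → ℕ → ℝ) : Prop :=
  (∀ k ∈ Finset.Icc 1 K, 0 ≤ q k) ∧
  (∀ k ∈ Finset.Icc 1 K, Pi k = 0 → q k = 0) ∧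
  (∀ k ∈ Finset.Icc 1 K, ∀ n ∈ NI N Pi k, 0 ≤ p k n) ∧
  (∑ k ∈ Finset.Icc 1 K, q k ≤ (K : ℝ) * Q) ∧
  (∀ i ∈ Finset.Icc 1 K,
    ∑ k ∈ Finset.Icc 1 i, ∑ n ∈ NI N Pi k, p k n ≤
      ζ * ∑ k ∈ Finset.Icc 1 (i - 1), h k (Pi k) * q k + B1)

/-- Achievable rate for Problem (P). -/
def RateP (K N : ℕ) (g : ℕ → ℕ → ℝ) (Γσ : ℝ) (Pi : ℕ → ℕ) (p : ℕ → ℕ → ℝ) : ℝ :=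
  (1 / ((K : ℝ) * N)) * ∑ k ∈ Finset.Icc 1 K, ∑ n ∈ NI N Pi k,
    Real.logb 2 (1 + g k n * p k n / Γσ)

open Classical in
/-- The set `D` of causally dominating slots. -/
def Dset (K : ℕ) (h : ℕ → ℕ → ℝ) (Pi : ℕ → ℕ) : Finset ℕ :=
  (Finset.Icc 1 (K - 1)).filter
    (fun k => Pi k ≠ 0 ∧ ∀ j, 1 ≤ j → j < k → h j (Pi j) < h k (Pi k))

end

private lemma sum_split' (f : ℕ → ℝ) {m n : ℕ} (hmn : m ≤ n) :
    ∑ k ∈ Finset.Icc 1 n, f k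
      = ∑ k ∈ Finset.Icc 1 m, f k + ∑ k ∈ Finset.Ioc m n, f k := by
  rw [show Finset.Icc 1 n = Finset.Ioc 0 n from by ext x; simp [Finset.mem_Icc, Finset.mem_Ioc]; omega,
      show Finset.Icc 1 m = Finset.Ioc 0 m from by ext x; simp [Finset.mem_Icc, Finset.mem_Ioc]; omega]
  exact (Finset.sum_Ioc_consecutive f (Nat.zero_le m) hmn).symm

private lemma card_NI' {N : ℕ} {Pi : ℕ → ℕ} {k : ℕ} (hle : Pi k ≤ N) : (NI N Pi k).card = N := by
  rw [NI, Finset.sdiff_singleton_eq_erase, Finset.card_erase_of_mem (by simp [hle]), Nat.card_Icc]; omega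

set_option maxHeartbeats 1000000

theorem stmt5
    (K N : ℕ) (hK : 2 ≤ K) (hN : 2 ≤ N)
    (h g : ℕ → ℕ → ℝ)
    (hpos : ∀ k ∈ Finset.Icc 1 K, ∀ n ∈ Finset.Icc 1 N, 0 < h k n ∧ 0 < g k n)
    (hzero : ∀ k, h k 0 = 0 ∧ g k 0 = 0)
    (Q ζ B1 Γσ : ℝ) (hQ : 0 < Q) (hζ : 0 < ζ) (hB1 : 0 ≤ B1) (hΓσ : 0 < Γσ)
    (Pi : ℕ → ℕ) (hPiK : Pi K = 0) (hPiR : ∀ k ∈ Finset.Icc 1 K, Pi k ≤ N)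
    (M : ℕ) (hM : M = (Dset K h Pi).card)
    (d : ℕ → ℕ) (hd0 : d 0 = 0) (hdK : d (M + 1) = K)
    (hdmono : ∀ i j, i < j → j ≤ M + 1 → d i < d j)
    (hdmem : ∀ i, 1 ≤ i → i ≤ M → d i ∈ Dset K h Pi)
    (hdsurj : ∀ k ∈ Dset K h Pi, ∃ i, 1 ≤ i ∧ i ≤ M ∧ d i = k)
    (q : ℕ → ℝ) (p : ℕ → ℕ → ℝ)
    (hfeas : FeasibleP K N h Q ζ B1 Pi q p)
    (hqDc : ∀ k ∈ Finset.Icc 1 K, k ∉ Dset K h Pi → q k = 0)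
    (j : ℕ) (hj1 : 1 ≤ j) (hjM : j + 1 ≤ M)
    (heq : ∑ k ∈ Finset.Icc 1 (d j), ∑ n ∈ NI N Pi k, p k n =
      ζ * ∑ k ∈ Finset.Icc 1 (d j - 1), h k (Pi k) * q k + B1)
    (Δ : ℝ)
    (hΔ : Δ = ζ * ∑ k ∈ Finset.Icc 1 (d (j + 1) - 1), h k (Pi k) * q k + B1 -
      ∑ k ∈ Finset.Icc 1 (d (j + 1)), ∑ n ∈ NI N Pi k, p k n)
    (hΔpos : 0 < Δ) :
    (∀ k ∈ Finset.Icc 1 K, 0 ≤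
      (if k = d j then q (d j) - Δ / (ζ * h (d j) (Pi (d j)))
        else if k = d (j + 1) then q (d (j + 1)) + Δ / (ζ * h (d j) (Pi (d j)))
        else q k))
    ∧ FeasibleP K N h Q ζ B1 Pi
      (fun k => if k = d j then q (d j) - Δ / (ζ * h (d j) (Pi (d j)))
        else if k = d (j + 1) then q (d (j + 1)) + Δ / (ζ * h (d j) (Pi (d j)))
        else q k)
      (fun k n => if d (j + 1) < k then
          p k n + (h (d (j + 1)) (Pi (d (j + 1))) - h (d j) (Pi (d j))) * Δ /
            (h (d j) (Pi (d j)) * ((K : ℝ) - (d (j + 1) : ℝ)) * (N : ℝ))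
        else p k n)
    ∧ RateP K N g Γσ Pi p <
      RateP K N g Γσ Pi
        (fun k n => if d (j + 1) < k then
            p k n + (h (d (j + 1)) (Pi (d (j + 1))) - h (d j) (Pi (d j))) * Δ /
              (h (d j) (Pi (d j)) * ((K : ℝ) - (d (j + 1) : ℝ)) * (N : ℝ))
          else p k n) := by
  obtain ⟨hqnn, hq0, hpnn, hsum, hcaus⟩ := hfeas
  set a := d j with ha_def
  set b := d (j + 1) with hb_def
  -- membership facts
  have haD : a ∈ Dset K h Pi := hdmem j hj1 (by omega)
  have hbD : b ∈ Dset K h Pi := hdmem (j + 1) (by omega) hjM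
  simp only [Dset, Finset.mem_filter, Finset.mem_Icc] at haD hbD
  obtain ⟨⟨ha1, haK1⟩, hPia, hadom⟩ := haD
  obtain ⟨⟨hb1, hbK1⟩, hPib, hbdom⟩ := hbD
  have haK : a < K := by omega
  have hbK : b < K := by omega
  have hab : a < b := hdmono j (j + 1) (by omega) (by omega)
  have hamem : a ∈ Finset.Icc 1 K := Finset.mem_Icc.2 ⟨ha1, by omega⟩
  have hbmem : b ∈ Finset.Icc 1 K := Finset.mem_Icc.2 ⟨hb1, by omega⟩
  have hha : 0 < h a (Pi a) :=
    (hpos a hamem (Pi a) (Finset.mem_Icc.2 ⟨Nat.one_le_iff_ne_zero.2 hPia, hPiR a hamem⟩)).1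
  have hhb : 0 < h b (Pi b) :=
    (hpos b hbmem (Pi b) (Finset.mem_Icc.2 ⟨Nat.one_le_iff_ne_zero.2 hPib, hPiR b hbmem⟩)).1
  have hhab : h a (Pi a) < h b (Pi b) := hbdom a ha1 hab
  have hne : a ≠ b := Nat.ne_of_lt hab
  set δ := Δ / (ζ * h a (Pi a)) with hδ_def
  set E := (h b (Pi b) - h a (Pi a)) * Δ / (h a (Pi a) * ((K : ℝ) - (b : ℝ)) * (N : ℝ)) with hE_def
  set P : ℕ → ℝ := fun k => ∑ n ∈ NI N Pi k, p k n with hP_def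
  have hδpos : 0 < δ := div_pos hΔpos (by positivity)
  have hKb : (0:ℝ) < (K : ℝ) - (b : ℝ) := by
    have : (b:ℝ) < (K:ℝ) := by exact_mod_cast hbK
    linarith
  have hEpos : 0 < E := by
    apply div_pos (by nlinarith) (by positivity)
  -- q is zero strictly between a and b
  have hqmid : ∀ k, a < k → k < b → q k = 0 := by
    intro k hak hkb
    apply hqDc k (Finset.mem_Icc.2 ⟨by omega, by omega⟩)
    intro hkD
    obtain ⟨i, hi1, hiM, hik⟩ := hdsurj k hkD
    subst hik
    rcases lt_trichotomy i j with hij | hij | hij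
    · have := hdmono i j hij (by omega); omega
    · subst hij; omega
    · rcases lt_trichotomy i (j + 1) with hij' | hij' | hij'
      · omega
      · subst hij'; omega
      · have := hdmono (j + 1) i hij' (by omega); omega
  -- nonnegativity of P
  have hPnn : ∀ k ∈ Finset.Icc 1 K, 0 ≤ P k := fun k hk =>
    Finset.sum_nonneg fun n hn => hpnn k hk n hn
  have hPnn' : ∀ k, a < k → k ≤ b → 0 ≤ P k := fun k h1 h2 =>
    hPnn k (Finset.mem_Icc.2 ⟨by omega, by omega⟩)
  -- key identity
  have hSb : ∑ k ∈ Finset.Icc 1 (b - 1), h k (Pi k) * q k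
      = ∑ k ∈ Finset.Icc 1 (a - 1), h k (Pi k) * q k + h a (Pi a) * q a := by
    rw [sum_split' _ (show a - 1 ≤ b - 1 by omega)]
    have h1 : Finset.Ioc (a - 1) (b - 1) = insert a (Finset.Ioc a (b - 1)) := by
      ext x; simp [Finset.mem_Ioc, Finset.mem_insert]; omega
    rw [h1, Finset.sum_insert (by simp [Finset.mem_Ioc])]
    have h2 : ∑ k ∈ Finset.Ioc a (b - 1), h k (Pi k) * q k = 0 :=
      Finset.sum_eq_zero fun k hk => by
        rw [Finset.mem_Ioc] at hk
        rw [hqmid k hk.1 (by omega), mul_zero]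
    rw [h2]; ring
  have hTb : ∑ k ∈ Finset.Icc 1 b, P k
      = ∑ k ∈ Finset.Icc 1 a, P k + ∑ k ∈ Finset.Ioc a b, P k :=
    sum_split' _ (le_of_lt hab)
  have key : Δ = ζ * (h a (Pi a) * q a) - ∑ k ∈ Finset.Ioc a b, P k := by
    rw [hΔ, hSb, hTb, ← hP_def]
    simp only [hP_def]
    rw [heq]  -- heq after set: d j = a
    ring
  have hδqa : δ ≤ q a := by
    rw [hδ_def, div_le_iff₀ (by positivity)]
    have h1 : 0 ≤ ∑ k ∈ Finset.Ioc a b, P k :=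
      Finset.sum_nonneg fun k hk => by
        rw [Finset.mem_Ioc] at hk; exact hPnn' k hk.1 hk.2
    nlinarith
  -- Part 1: nonnegativity of the modified q
  have H1 : ∀ k ∈ Finset.Icc 1 K, 0 ≤
      (if k = a then q a - δ else if k = b then q b + δ else q k) := by
    intro k hk
    by_cases hka : k = a
    · rw [if_pos hka]; linarith
    · rw [if_neg hka]
      by_cases hkb : k = b
      · rw [if_pos hkb]; have := hqnn b hbmem; linarith
      · rw [if_neg hkb]; exact hqnn k hk
  -- weighted sum formula for the modified q
  have hqw : ∀ (w : ℕ → ℝ) (m : ℕ),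
      ∑ k ∈ Finset.Icc 1 m, w k * (if k = a then q a - δ else if k = b then q b + δ else q k)
        = ∑ k ∈ Finset.Icc 1 m, w k * q k
          + (if a ≤ m then -(w a * δ) else 0) + (if b ≤ m then w b * δ else 0) := by
    intro w m
    have step : ∀ k ∈ Finset.Icc 1 m,
        w k * (if k = a then q a - δ else if k = b then q b + δ else q k)
          = w k * q k + ((if k = a then -(w a * δ) else 0) + (if k = b then w b * δ else 0)) := by
      intro k _
      by_cases hka : k = a
      · subst hka; rw [if_pos rfl, if_pos rfl, if_neg hne]; ring
      · rw [if_neg hka, if_neg hka]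
        by_cases hkb : k = b
        · subst hkb; rw [if_pos rfl, if_pos rfl]; ring
        · rw [if_neg hkb, if_neg hkb]; ring
    rw [Finset.sum_congr rfl step, Finset.sum_add_distrib, Finset.sum_add_distrib,
        Finset.sum_ite_eq' (Finset.Icc 1 m) a (fun _ => -(w a * δ)),
        Finset.sum_ite_eq' (Finset.Icc 1 m) b (fun _ => w b * δ)]
    have h1 : (a ∈ Finset.Icc 1 m) = (a ≤ m) := by
      simp [Finset.mem_Icc, ha1]
    have h2 : (b ∈ Finset.Icc 1 m) = (b ≤ m) := by
      simp [Finset.mem_Icc, hb1]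
    rw [show (if a ∈ Finset.Icc 1 m then -(w a * δ) else 0)
          = (if a ≤ m then -(w a * δ) else 0) from by
        by_cases hc : a ≤ m
        · rw [if_pos hc, if_pos (Finset.mem_Icc.2 ⟨ha1, hc⟩)]
        · rw [if_neg hc, if_neg (by simp [Finset.mem_Icc]; omega)],
       show (if b ∈ Finset.Icc 1 m then w b * δ else 0)
          = (if b ≤ m then w b * δ else 0) from by
        by_cases hc : b ≤ m
        · rw [if_pos hc, if_pos (Finset.mem_Icc.2 ⟨hb1, hc⟩)]
        · rw [if_neg hc, if_neg (by simp [Finset.mem_Icc]; omega)]]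
    ring
  -- total q sum unchanged
  have hsum' : ∑ k ∈ Finset.Icc 1 K, (if k = a then q a - δ else if k = b then q b + δ else q k)
      = ∑ k ∈ Finset.Icc 1 K, q k := by
    have hw := hqw (fun _ => 1) K
    simp only [one_mul] at hw
    rw [hw, if_pos (show a ≤ K by omega), if_pos (show b ≤ K by omega)]; ring
  have hqwh : ∀ m : ℕ,
      ∑ k ∈ Finset.Icc 1 m, h k (Pi k) * (if k = a then q a - δ else if k = b then q b + δ else q k)
        = ∑ k ∈ Finset.Icc 1 m, h k (Pi k) * q k
          + (if a ≤ m then -(h a (Pi a) * δ) else 0) + (if b ≤ m then h b (Pi b) * δ else 0) := by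
    intro m
    simpa using hqw (fun k => h k (Pi k)) m
  -- inner sum formula for modified p
  have hinner : ∀ k ∈ Finset.Icc 1 K,
      ∑ n ∈ NI N Pi k, (if b < k then p k n + E else p k n)
        = P k + (if b < k then (N:ℝ) * E else 0) := by
    intro k hk
    by_cases hbk : b < k
    · simp only [if_pos hbk]
      rw [Finset.sum_add_distrib, Finset.sum_const, card_NI' (hPiR k hk), nsmul_eq_mul]
    · simp [if_neg hbk, hP_def]
  -- aggregated left-hand side for causality
  have hleft : ∀ i, i ≤ K →
      ∑ k ∈ Finset.Icc 1 i, ∑ n ∈ NI N Pi k, (if b < k then p k n + E else p k n)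
        = ∑ k ∈ Finset.Icc 1 i, P k + ((i - b : ℕ) : ℝ) * ((N:ℝ) * E) := by
    intro i hiK
    rw [Finset.sum_congr rfl (fun k hk => hinner k (Finset.mem_Icc.2
        ⟨(Finset.mem_Icc.1 hk).1, le_trans (Finset.mem_Icc.1 hk).2 hiK⟩)),
       Finset.sum_add_distrib]
    congr 1
    rw [← Finset.sum_filter]
    have hfil : (Finset.Icc 1 i).filter (fun k => b < k) = Finset.Ioc b i := by
      ext x; simp [Finset.mem_filter, Finset.mem_Icc, Finset.mem_Ioc]; omega
    rw [hfil, Finset.sum_const, Nat.card_Ioc, nsmul_eq_mul]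
  -- partial energy sum formula between a and b
  have hSmid : ∀ m, a ≤ m → m ≤ b - 1 →
      ∑ k ∈ Finset.Icc 1 m, h k (Pi k) * q k
        = ∑ k ∈ Finset.Icc 1 (a - 1), h k (Pi k) * q k + h a (Pi a) * q a := by
    intro m ham hmb
    rw [sum_split' _ (show a - 1 ≤ m by omega)]
    have h1 : Finset.Ioc (a - 1) m = insert a (Finset.Ioc a m) := by
      ext x; simp [Finset.mem_Ioc, Finset.mem_insert]; omega
    rw [h1, Finset.sum_insert (by simp [Finset.mem_Ioc])]
    have h2 : ∑ k ∈ Finset.Ioc a m, h k (Pi k) * q k = 0 :=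
      Finset.sum_eq_zero fun k hk => by
        rw [Finset.mem_Ioc] at hk
        rw [hqmid k hk.1 (by omega), mul_zero]
    rw [h2]; ring
  -- main causality inequality
  have Hcaus : ∀ i ∈ Finset.Icc 1 K,
      ∑ k ∈ Finset.Icc 1 i, ∑ n ∈ NI N Pi k, (if b < k then p k n + E else p k n) ≤
        ζ * ∑ k ∈ Finset.Icc 1 (i - 1), h k (Pi k) *
          (if k = a then q a - δ else if k = b then q b + δ else q k) + B1 := by
    intro i hi
    have hi' := Finset.mem_Icc.1 hi
    rw [hleft i hi'.2, hqwh (i - 1)]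
    have horig := hcaus i hi
    by_cases h1 : a < i
    · by_cases h2 : b < i
      · -- i > b
        rw [if_pos (show a ≤ i - 1 by omega), if_pos (show b ≤ i - 1 by omega)]
        have hc1 : ((i - b : ℕ) : ℝ) ≤ (K:ℝ) - (b:ℝ) := by
          rw [Nat.cast_sub (by omega : b ≤ i)]
          have : (i:ℝ) ≤ (K:ℝ) := by exact_mod_cast hi'.2
          linarith
        have hc2 : ((i - b : ℕ) : ℝ) * ((N:ℝ) * E) ≤ ((K:ℝ) - (b:ℝ)) * ((N:ℝ) * E) :=
          mul_le_mul_of_nonneg_right hc1 (by positivity)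
        have hN0 : (N:ℝ) ≠ 0 := by positivity
        have hc3 : ((K:ℝ) - (b:ℝ)) * ((N:ℝ) * E)
            = ζ * (h b (Pi b) * δ) - ζ * (h a (Pi a) * δ) := by
          rw [hE_def, hδ_def]
          field_simp
        have h4 : ∑ k ∈ Finset.Icc 1 i, P k
            ≤ ζ * ∑ k ∈ Finset.Icc 1 (i - 1), h k (Pi k) * q k + B1 := by
          simpa [hP_def] using horig
        have hexp : ζ * (∑ k ∈ Finset.Icc 1 (i - 1), h k (Pi k) * q k
              + -(h a (Pi a) * δ) + h b (Pi b) * δ) + B1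
            = (ζ * ∑ k ∈ Finset.Icc 1 (i - 1), h k (Pi k) * q k + B1)
              + (ζ * (h b (Pi b) * δ) - ζ * (h a (Pi a) * δ)) := by ring
        rw [hexp]
        linarith [h4, hc2, hc3]
      · -- a < i ≤ b
        rw [if_pos (show a ≤ i - 1 by omega), if_neg (show ¬ b ≤ i - 1 by omega),
            show i - b = 0 by omega]
        simp only [Nat.cast_zero, zero_mul, add_zero]
        have hTi : ∑ k ∈ Finset.Icc 1 i, P k
            = ∑ k ∈ Finset.Icc 1 a, P k + ∑ k ∈ Finset.Ioc a i, P k :=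
          sum_split' _ (by omega)
        have hTa : ∑ k ∈ Finset.Icc 1 a, P k
            = ζ * ∑ k ∈ Finset.Icc 1 (a - 1), h k (Pi k) * q k + B1 := by
          simpa [hP_def] using heq
        have hmono : ∑ k ∈ Finset.Ioc a i, P k ≤ ∑ k ∈ Finset.Ioc a b, P k := by
          apply Finset.sum_le_sum_of_subset_of_nonneg
            (Finset.Ioc_subset_Ioc le_rfl (by omega))
          intro k hk _
          exact hPnn' k (Finset.mem_Ioc.1 hk).1 (Finset.mem_Ioc.1 hk).2
        have hSi : ∑ k ∈ Finset.Icc 1 (i - 1), h k (Pi k) * q k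
            = ∑ k ∈ Finset.Icc 1 (a - 1), h k (Pi k) * q k + h a (Pi a) * q a :=
          hSmid (i - 1) (by omega) (by omega)
        have hSi' : ζ * ∑ k ∈ Finset.Icc 1 (i - 1), h k (Pi k) * q k
            = ζ * ∑ k ∈ Finset.Icc 1 (a - 1), h k (Pi k) * q k
              + ζ * (h a (Pi a) * q a) := by rw [hSi]; ring
        have hhaδ : ζ * (h a (Pi a) * δ) = Δ := by
          rw [hδ_def]; field_simp
        have hexp : ζ * (∑ k ∈ Finset.Icc 1 (i - 1), h k (Pi k) * q k
              + -(h a (Pi a) * δ)) + B1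
            = (ζ * ∑ k ∈ Finset.Icc 1 (i - 1), h k (Pi k) * q k + B1)
              - ζ * (h a (Pi a) * δ) := by ring
        rw [hexp]
        linarith [hTi, hTa, hmono, hSi', key, hhaδ]
    · -- i ≤ a
      rw [if_neg (show ¬ a ≤ i - 1 by omega), if_neg (show ¬ b ≤ i - 1 by omega),
          show i - b = 0 by omega]
      simp only [Nat.cast_zero, zero_mul, add_zero]
      have h4 : ∑ k ∈ Finset.Icc 1 i, P k
          ≤ ζ * ∑ k ∈ Finset.Icc 1 (i - 1), h k (Pi k) * q k + B1 := by
        simpa [hP_def] using horig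
      linarith
  -- nonnegativity of g on information subchannels
  have hgnn : ∀ k ∈ Finset.Icc 1 K, ∀ n ∈ NI N Pi k, 0 ≤ g k n := by
    intro k hk n hn
    rw [NI, Finset.mem_sdiff, Finset.mem_Icc] at hn
    rcases Nat.eq_zero_or_pos n with hn0 | hn1
    · rw [hn0, (hzero k).2]
    · exact le_of_lt (hpos k hk n (Finset.mem_Icc.2 ⟨hn1, hn.1.2⟩)).2
  have harg : ∀ k ∈ Finset.Icc 1 K, ∀ n ∈ NI N Pi k, 0 < 1 + g k n * p k n / Γσ := by
    intro k hk n hn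
    have h1 : 0 ≤ g k n * p k n / Γσ :=
      div_nonneg (mul_nonneg (hgnn k hk n hn) (hpnn k hk n hn)) hΓσ.le
    linarith
  -- rate increase
  have Hrate : RateP K N g Γσ Pi p <
      RateP K N g Γσ Pi
        (fun k n => if b < k then p k n + E else p k n) := by
    rw [RateP, RateP]
    beta_reduce
    have hK0 : (0:ℝ) < (K:ℝ) := by exact_mod_cast (show 0 < K by omega)
    have hN0 : (0:ℝ) < (N:ℝ) := by exact_mod_cast (show 0 < N by omega)
    apply mul_lt_mul_of_pos_left _ (one_div_pos.mpr (mul_pos hK0 hN0))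
    apply Finset.sum_lt_sum
    · intro k hk
      apply Finset.sum_le_sum
      intro n hn
      by_cases hbk : b < k
      · simp only [if_pos hbk]
        apply Real.logb_le_logb_of_le one_lt_two (harg k hk n hn)
        have hmul : g k n * p k n ≤ g k n * (p k n + E) :=
          mul_le_mul_of_nonneg_left (by linarith) (hgnn k hk n hn)
        have hdiv := (div_le_div_iff_of_pos_right hΓσ).2 hmul
        linarith
      · simp only [if_neg hbk]; exact le_refl _
    · refine ⟨K, Finset.mem_Icc.2 ⟨by omega, le_rfl⟩, ?_⟩
      have hKmem : K ∈ Finset.Icc 1 K := Finset.mem_Icc.2 ⟨by omega, le_rfl⟩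
      apply Finset.sum_lt_sum
      · intro n hn
        simp only [if_pos hbK]
        apply Real.logb_le_logb_of_le one_lt_two (harg K hKmem n hn)
        have hmul : g K n * p K n ≤ g K n * (p K n + E) :=
          mul_le_mul_of_nonneg_left (by linarith) (hgnn K hKmem n hn)
        have hdiv := (div_le_div_iff_of_pos_right hΓσ).2 hmul
        linarith
      · have h1mem : 1 ∈ NI N Pi K := by
          rw [NI, Finset.mem_sdiff, Finset.mem_Icc, Finset.mem_singleton, hPiK]
          omega
        refine ⟨1, h1mem, ?_⟩
        simp only [if_pos hbK]
        apply Real.logb_lt_logb one_lt_two (harg K hKmem 1 h1mem)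
        have hg1 : 0 < g K 1 := (hpos K hKmem 1 (Finset.mem_Icc.2 ⟨le_rfl, by omega⟩)).2
        have hmul : g K 1 * p K 1 < g K 1 * (p K 1 + E) := by nlinarith
        have hdiv := (div_lt_div_iff_of_pos_right hΓσ).2 hmul
        linarith
  -- assemble
  refine ⟨H1, ⟨H1, ?_, ?_, ?_, Hcaus⟩, Hrate⟩
  · intro k hk hPik
    by_cases hka : k = a
    · exact absurd (hka ▸ hPik) hPia
    · by_cases hkb : k = b
      · exact absurd (hkb ▸ hPik) hPib
      · simp only [if_neg hka, if_neg hkb]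
        exact hq0 k hk hPik
  · intro k hk n hn
    by_cases hbk : b < k
    · simp only [if_pos hbk]
      have := hpnn k hk n hn
      linarith
    · simp only [if_neg hbk]; exact hpnn k hk n hn
  · rw [show (∑ k ∈ Finset.Icc 1 K, (fun k => if k = a then q a - δ
        else if k = b then q b + δ else q k) k)
        = ∑ k ∈ Finset.Icc 1 K, q k from hsum']
    exact hsum
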